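/- For all real θ > 0 and x ≥ 3/2, the quantity 1 + 3·tanh(θ)·tanh(xθ) - 4·tanh(θ)·tanh(2xθ) is positive. -/
import Mathlib

set_option maxHeartbeats 1000000 in
lemma poly_key_stmt3 (v u : ℝ) (hv : 1 < v) (hu : v^3 ≤ u) :
    0 < u^6 + 4*u^4 - 3*u^2 + v^4 + 4*u^2*v^4 - 3*u^4*v^4 := by
  obtain ⟨w, hw, rfl⟩ : ∃ w, 0 ≤ w ∧ u = v^3 + w := ⟨u - v^3, by linarith, by ring⟩
  obtain ⟨e, he, rfl⟩ : ∃ e, 0 < e ∧ v = 1 + e := ⟨v - 1, by linarith, by ring⟩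
  have key : ((1+e)^3+w)^6 + 4*((1+e)^3+w)^4 - 3*((1+e)^3+w)^2 + (1+e)^4
      + 4*((1+e)^3+w)^2*(1+e)^4 - 3*((1+e)^3+w)^4*(1+e)^4
      = 189*(e^2-e^3)^2 + 186*(e^2-3*e^4)^2 + (4 + 12*w^1 + 22*w^2 + 24*w^3 + 16*w^4 + 6*w^5 + 1*w^6 + 44*e^1 + 116*e^1*w^1 + 160*e^1*w^2 + 144*e^1*w^3 + 78*e^1*w^4 + 18*e^1*w^5 + 198*e^2 + 420*e^2*w^1 + 564*e^2*w^2 + 516*e^2*w^3 + 207*e^2*w^4 + 18*e^2*w^5 + 440*e^3 + 916*e^3*w^1 + 1636*e^3*w^2 + 1276*e^3*w^3 + 288*e^3*w^4 + 6*e^3*w^5 + 1*e^4 + 1906*e^4*w^1 + 4009*e^4*w^2 + 2100*e^4*w^3 + 222*e^4*w^4 + 4758*e^5*w^1 + 7488*e^5*w^2 + 2268*e^5*w^3 + 90*e^5*w^4 + 10838*e^6*w^1 + 10104*e^6*w^2 + 1596*e^6*w^3 + 15*e^6*w^4 + 1152*e^7 + 18602*e^7*w^1 + 9720*e^7*w^2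 + 708*e^7*w^3 + 5634*e^8 + 23310*e^8*w^1 + 6615*e^8*w^2 + 180*e^8*w^3 + 15220*e^9 + 21466*e^9*w^1 + 3120*e^9*w^2 + 20*e^9*w^3 + 20002*e^10 + 14586*e^10*w^1 + 972*e^10*w^2 + 18768*e^11 + 7254*e^11*w^1 + 180*e^11*w^2 + 13108*e^12 + 2574*e^12*w^1 + 15*e^12*w^2 + 6888*e^13 + 618*e^13*w^1 + 2700*e^14 + 90*e^14*w^1 + 768*e^15 + 6*e^15*w^1 + 150*e^16 + 18*e^17 + 1*e^18) := by ring
  rw [key]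
  positivity

lemma tanh_exp_stmt3 (y : ℝ) : Real.tanh y = (Real.exp (2*y) - 1) / (Real.exp (2*y) + 1) := by
  rw [Real.tanh_eq_sinh_div_cosh, Real.sinh_eq, Real.cosh_eq, Real.exp_neg]
  have h1 : Real.exp y > 0 := Real.exp_pos y
  have h2 : Real.exp (2*y) = Real.exp y * Real.exp y := by
    rw [two_mul, Real.exp_add]
  rw [h2]
  have h3 : Real.exp y * Real.exp y + 1 > 0 := by positivity
  field_simp

theorem stmt_3 (θ x : ℝ) (hθ : 0 < θ) (hx : 3 / 2 ≤ x) :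
    0 < 1 + 3 * Real.tanh θ * Real.tanh (x * θ) - 4 * Real.tanh θ * Real.tanh (2 * x * θ) := by
  set v := Real.exp (θ/2) with hvdef
  set u := Real.exp (x*θ) with hudef
  have hv : 1 < v := by
    rw [hvdef]
    exact Real.one_lt_exp_iff.mpr (by linarith)
  have hu : v^3 ≤ u := by
    rw [hvdef, hudef]
    have : Real.exp (θ/2) ^ 3 = Real.exp (θ/2 + θ/2 + θ/2) := by
      rw [Real.exp_add, Real.exp_add]; ring
    rw [this]
    exact Real.exp_le_exp.mpr (by nlinarith)
  have e1 : Real.exp (2*θ) = v^4 := by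
    rw [hvdef, show (2:ℝ)*θ = θ/2 + θ/2 + θ/2 + θ/2 by ring,
      Real.exp_add, Real.exp_add, Real.exp_add]; ring
  have e2 : Real.exp (2*(x*θ)) = u^2 := by
    rw [hudef, show (2:ℝ)*(x*θ) = x*θ + x*θ by ring, Real.exp_add]; ring
  have e3 : Real.exp (2*(2*x*θ)) = u^4 := by
    rw [hudef, show (2:ℝ)*(2*x*θ) = x*θ + x*θ + x*θ + x*θ by ring,
      Real.exp_add, Real.exp_add, Real.exp_add]; ring
  rw [tanh_exp_stmt3 θ, tanh_exp_stmt3 (x*θ), tanh_exp_stmt3 (2*x*θ), e1, e2, e3]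
  have hM := poly_key_stmt3 v u hv hu
  have h1 : (0:ℝ) < v^4+1 := by positivity
  have h2 : (0:ℝ) < u^2+1 := by positivity
  have h3 : (0:ℝ) < u^4+1 := by positivity
  rw [show 1 + 3*((v^4-1)/(v^4+1))*((u^2-1)/(u^2+1)) - 4*((v^4-1)/(v^4+1))*((u^4-1)/(u^4+1))
      = 2*(u^6 + 4*u^4 - 3*u^2 + v^4 + 4*u^2*v^4 - 3*u^4*v^4) / ((v^4+1)*((u^2+1)*(u^4+1))) from by
    field_simp; ring]
  exact div_pos (by linarith) (by positivity)
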